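/- For t ∈ {+,-}^n with the - at position l surviving in the reduced form of (t_l,...,t_n), let p > l be minimal with t_p = + (assuming such p exists, so t_{l+1} = ... = t_{p-1} = -). Then p - l > 1 + h₊(t_{p+1},...,t_n) and h₋^l(t) = (p - l - 1) - h₊(t_{p+1},...,t_n) + h₋(t_{p+1},...,t_n). -/
import Mathlib


-- Signs: `true` encodes `+`, `false` encodes `-`.  In reduced forms, `none` encodes `0`.

/-- Replace the first surviving `+` (i.e. first `some true`) by `0` (i.e. `none`). -/
def zapPlus : List (Option Bool) → List (Option Bool)
  | [] => []
  | some true :: r => none :: r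
  | y :: r => y :: zapPlus r

/-- The reduced form `t^red` of a sign sequence `t ∈ {+,-}ⁿ`: repeatedly cancel pairs
`(t_a, t_b) = (-, +)` with `a < b` and only `0`'s strictly in between, replacing both
entries by `0`, until no `+` appears to the right of a `-`. -/
def red : List Bool → List (Option Bool)
  | [] => []
  | x :: s =>
    let r := red s
    if x then some true :: r
    else if r.any (· == some true) then none :: zapPlus r
    else some false :: r

/-- `h₊(t)`: the number of `+`'s in the reduced form of `t`. -/
def hp (t : List Bool) : ℕ := (red t).count (some true)

/-- `h₋(t)`: the number of `-`'s in the reduced form of `t`. -/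
def hm (t : List Bool) : ℕ := (red t).count (some false)

/-- The weight `wt(t) = h₋(t) - h₊(t)`. -/
def wt (t : List Bool) : ℤ := (hm t : ℤ) - (hp t : ℤ)

/-- The largest index `i` with `t^red_i = +`, if it exists. -/
def eIdx (t : List Bool) : Option ℕ :=
  ((List.range t.length).filter (fun i => (red t)[i]? == some (some true))).getLast?

/-- The smallest index `j` with `t^red_j = -`, if it exists. -/
def fIdx (t : List Bool) : Option ℕ :=
  ((List.range t.length).filter (fun i => (red t)[i]? == some (some false))).head?

/-- The crystal operator `ẽ`: flip the rightmost surviving `+` to `-` (or `0` = `none`). -/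
def etilde (t : List Bool) : Option (List Bool) :=
  (eIdx t).map (fun i => t.set i false)

/-- The crystal operator `f̃`: flip the leftmost surviving `-` to `+` (or `0` = `none`). -/
def ftilde (t : List Bool) : Option (List Bool) :=
  (fIdx t).map (fun i => t.set i true)

/-- The order `≻` on `{+,-}ⁿ`: `t' ≻ t` iff there is an index `i` such that
`t'_j = t_j` for all `j > i`, while `t'_i = -` and `t_i = +`. -/
def succOrd (t' t : List Bool) : Prop :=
  ∃ i : ℕ, (∀ j, i < j → t'[j]? = t[j]?) ∧ t'[i]? = some false ∧ t[i]? = some true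


lemma zapPlus_count_false (r : List (Option Bool)) :
    (zapPlus r).count (some false) = r.count (some false) := by
  induction r with
  | nil => rfl
  | cons x r ih =>
    match x with
    | some true => simp [zapPlus, List.count_cons]
    | some false => simp [zapPlus, List.count_cons, ih]
    | none => simp [zapPlus, List.count_cons, ih]

lemma zapPlus_count_true (r : List (Option Bool)) (h : 0 < r.count (some true)) :
    (zapPlus r).count (some true) = r.count (some true) - 1 := by
  induction r with
  | nil => simp at h
  | cons x r ih =>
    match x with
    | some true => simp [zapPlus, List.count_cons]
    | some false =>
      simp only [List.count_cons] at h ⊢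
      simp only [zapPlus]
      rw [List.count_cons, ih (by simpa using h)]
      simp at h ⊢
    | none =>
      simp only [List.count_cons] at h ⊢
      simp only [zapPlus]
      rw [List.count_cons, ih (by simpa using h)]
      simp at h ⊢

lemma any_true_iff (r : List (Option Bool)) :
    r.any (· == some true) = true ↔ 0 < r.count (some true) := by
  simp [List.any_eq_true, List.count_pos_iff]

lemma count_true_red_repl (k : ℕ) (u : List Bool) :
    (red (List.replicate k false ++ u)).count (some true)
      = (red u).count (some true) - k := by
  induction k with
  | zero => simp
  | succ k ih =>
    rw [List.replicate_succ, List.cons_append]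
    simp only [red]
    by_cases h : (red (List.replicate k false ++ u)).any (· == some true) = true
    · rw [if_neg (by simp), if_pos h, List.count_cons]
      rw [any_true_iff] at h
      rw [zapPlus_count_true _ h, ih]
      simp
      omega
    · rw [if_neg (by simp), if_neg h, List.count_cons]
      have h0 : (red (List.replicate k false ++ u)).count (some true) = 0 := by
        by_contra hc
        exact h ((any_true_iff _).2 (Nat.pos_of_ne_zero hc))
      rw [ih] at h0
      simp
      omega

lemma count_false_red_repl (k : ℕ) (u : List Bool) :
    (red (List.replicate k false ++ u)).count (some false)
      = (red u).count (some false) + (k - (red u).count (some true)) := by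
  induction k with
  | zero => simp
  | succ k ih =>
    rw [List.replicate_succ, List.cons_append]
    simp only [red]
    by_cases h : (red (List.replicate k false ++ u)).any (· == some true) = true
    · rw [if_neg (by simp), if_pos h, List.count_cons]
      rw [any_true_iff, count_true_red_repl] at h
      rw [zapPlus_count_false, ih]
      simp
      omega
    · rw [if_neg (by simp), if_neg h, List.count_cons]
      have h0 : (red u).count (some true) - k = 0 := by
        rw [← count_true_red_repl]
        by_contra hc
        exact h ((any_true_iff _).2 (Nat.pos_of_ne_zero hc))
      rw [ih]
      simp
      omega

lemma head_red_repl (k : ℕ) (u : List Bool)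
    (h : (red (List.replicate (k + 1) false ++ u))[0]? = some (some false)) :
    (red u).count (some true) ≤ k := by
  by_contra hc
  push_neg at hc
  rw [List.replicate_succ, List.cons_append] at h
  simp only [red] at h
  have hany : (red (List.replicate k false ++ u)).any (· == some true) = true := by
    rw [any_true_iff, count_true_red_repl]
    omega
  rw [if_neg (by simp), if_pos hany] at h
  simp at h

lemma drop_eq_replicate (t : List Bool) (p : ℕ) (hp' : p ≤ t.length) :
    ∀ k l, l + k = p → (∀ q, l ≤ q → q < p → t[q]? = some false) →
    t.drop l = List.replicate k false ++ t.drop p := by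
  intro k
  induction k with
  | zero => intro l h _; simp [show l = p by omega]
  | succ k ih =>
    intro l h hall
    have hl : l < t.length := by omega
    have hxl : t[l] = false := by
      have := hall l le_rfl (by omega)
      rw [List.getElem?_eq_getElem hl] at this
      simpa using this
    rw [List.drop_eq_getElem_cons hl, hxl,
      ih (l + 1) (by omega) (fun q hq hq' => hall q (by omega) hq')]
    simp [List.replicate_succ]

/-- If the `-` at position `l` of `t` survives in the reduced form of `(t_l, ..., t_n)`,
and `p > l` is minimal with `t_p = +` (so `t_{l+1} = ... = t_{p-1} = -`), then
`p - l > 1 + h₊(t_{p+1},...,t_n)` and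
`h₋^l(t) = (p - l - 1) - h₊(t_{p+1},...,t_n) + h₋(t_{p+1},...,t_n)`
(the latter stated additively to avoid truncated subtraction). -/
theorem hm_formula (t : List Bool) (l p : ℕ) (hlp : l < p) (hpn : p < t.length)
    (htp : t[p]? = some true)
    (hbetween : ∀ q, l < q → q < p → t[q]? = some false)
    (hsurv : (red (t.drop l))[0]? = some (some false)) :
    1 + hp (t.drop (p + 1)) < p - l ∧
    hm (t.drop l) + hp (t.drop (p + 1)) = (p - l - 1) + hm (t.drop (p + 1)) := by
  have hl : l < t.length := by omega
  -- t[l] = false, from hsurv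
  have hxl : t[l]? = some false := by
    rw [List.getElem?_eq_getElem hl]
    rcases hb : t[l] with _ | _
    · rfl
    · exfalso
      rw [List.drop_eq_getElem_cons hl, hb] at hsurv
      simp [red] at hsurv
  -- the drop decomposition
  have hdecomp : t.drop l = List.replicate (p - l) false ++ true :: t.drop (p + 1) := by
    have h1 : t.drop p = true :: t.drop (p + 1) := by
      rw [List.drop_eq_getElem_cons hpn]
      rw [List.getElem?_eq_getElem hpn] at htp
      simp at htp
      rw [htp]
    rw [← h1]
    refine drop_eq_replicate t p (le_of_lt hpn) (p - l) l (by omega) ?_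
    intro q hq hq'
    rcases Nat.eq_or_lt_of_le hq with rfl | hlt
    · exact hxl
    · exact hbetween q hlt hq'
  set s := t.drop (p + 1) with hs
  have hredu : red (true :: s) = some true :: red s := by simp [red]
  have hct : (red (true :: s)).count (some true) = hp s + 1 := by
    rw [hredu, List.count_cons]
    simp [hp]
  have hcf : (red (true :: s)).count (some false) = hm s := by
    rw [hredu, List.count_cons]
    simp [hm]
  obtain ⟨k, hk⟩ : ∃ k, p - l = k + 1 := ⟨p - l - 1, by omega⟩
  rw [hdecomp, hk] at hsurv
  have hle := head_red_repl k (true :: s) hsurv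
  rw [hct] at hle
  constructor
  · omega
  · have : hm (t.drop l) = hm s + ((k + 1) - (hp s + 1)) := by
      rw [hm, hdecomp, hk, count_false_red_repl, hct, hcf]
    omega
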